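/- Let D be a subset of the unit sphere of an infinite-dimensional real Hilbert space H with closed linear span equal to H. If ρ(D) := inf_{‖x‖=1} sup_{g∈D} |⟨x,g⟩| = 0, then there exists an orthonormal sequence (wₙ) in H such that sup_{g∈D} |⟨wₙ, g⟩| → 0 as n → ∞. -/

import Mathlib

noncomputable def chainAux {α : Type*} (Q : ∀ n, (Fin n → α) → Prop) (z : Q 0 Fin.elim0)
    (step : ∀ n f, Q n f → {x : α // Q (n+1) (Fin.snoc f x)}) :
    ∀ n, {f : Fin n → α // Q n f}
  | 0 => ⟨Fin.elim0, z⟩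
  | n+1 => ⟨_, (step n (chainAux Q z step n).1 (chainAux Q z step n).2).2⟩

lemma chainAux_succ {α : Type*} (Q : ∀ n, (Fin n → α) → Prop) (z : Q 0 Fin.elim0)
    (step : ∀ n f, Q n f → {x : α // Q (n+1) (Fin.snoc f x)}) (n : ℕ) :
    (chainAux Q z step (n+1)).1
      = Fin.snoc (chainAux Q z step n).1
        (step n (chainAux Q z step n).1 (chainAux Q z step n).2).1 := rfl

lemma chainAux_compat {α : Type*} (Q : ∀ n, (Fin n → α) → Prop) (z : Q 0 Fin.elim0)
    (step : ∀ n f, Q n f → {x : α // Q (n+1) (Fin.snoc f x)}) :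
    ∀ m n (h : n < m), (chainAux Q z step m).1 ⟨n, h⟩
      = (chainAux Q z step (n+1)).1 (Fin.last n) := by
  intro m
  induction m with
  | zero => intro n h; omega
  | succ m ih =>
    intro n h
    rcases eq_or_lt_of_le (Nat.lt_succ_iff.mp h) with he | hl
    · subst he; rfl
    · have he : (⟨n, h⟩ : Fin (m+1)) = (⟨n, hl⟩ : Fin m).castSucc := rfl
      rw [he, chainAux_succ, Fin.snoc_castSucc]
      exact ih n hl

lemma orthonormal_chain {H : Type*} [NormedAddCommGroup H] [InnerProductSpace ℝ H]
    (P : ℕ → H → Prop)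
    (hstep : ∀ n (f : Fin n → H), Orthonormal ℝ f → (∀ i : Fin n, P i (f i)) →
      ∃ x : H, ‖x‖ = 1 ∧ (∀ i, (inner ℝ x (f i) : ℝ) = 0) ∧ P n x) :
    ∃ w : ℕ → H, Orthonormal ℝ w ∧ ∀ n, P n (w n) := by
  set Q : ∀ n, (Fin n → H) → Prop :=
    fun n f => Orthonormal ℝ f ∧ ∀ i : Fin n, P i (f i) with hQ
  have z : Q 0 Fin.elim0 := by
    constructor
    · rw [orthonormal_iff_ite]; exact fun i => i.elim0
    · exact fun i => i.elim0
  have step : ∀ n f, Q n f → {x : H // Q (n+1) (Fin.snoc f x)} := by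
    intro n f hf
    have hex := hstep n f hf.1 hf.2
    set x := hex.choose with hx
    obtain ⟨h1, h2, h3⟩ := hex.choose_spec
    rw [← hx] at h1 h2 h3
    refine ⟨x, ?_, ?_⟩
    · rw [orthonormal_iff_ite]
      have hff := orthonormal_iff_ite.mp hf.1
      intro i j
      refine Fin.lastCases ?_ (fun i' => ?_) i
      · refine Fin.lastCases ?_ (fun j' => ?_) j
        · simp [Fin.snoc_last, real_inner_self_eq_norm_sq, h1]
        · simp only [Fin.snoc_last, Fin.snoc_castSucc]
          rw [h2 j', if_neg (Fin.castSucc_lt_last j').ne']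
      · refine Fin.lastCases ?_ (fun j' => ?_) j
        · simp only [Fin.snoc_last, Fin.snoc_castSucc]
          rw [real_inner_comm, h2 i', if_neg (Fin.castSucc_lt_last i').ne]
        · simp only [Fin.snoc_castSucc]
          rw [hff i' j']
          by_cases hij : i' = j'
          · simp [hij]
          · rw [if_neg hij, if_neg (by simpa using hij)]
    · intro i
      refine Fin.lastCases ?_ (fun i' => ?_) i
      · simpa [Fin.snoc_last] using h3
      · simpa [Fin.snoc_castSucc] using hf.2 i'
  set w : ℕ → H := fun n => (chainAux Q z step (n+1)).1 (Fin.last n) with hw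
  have hcompat : ∀ m n (h : n < m), (chainAux Q z step m).1 ⟨n, h⟩ = w n :=
    fun m n h => chainAux_compat Q z step m n h
  refine ⟨w, ?_, ?_⟩
  · rw [orthonormal_iff_ite]
    intro i j
    rcases le_total i j with hij | hij
    · have hi : i < j + 1 := by omega
      have hj : j < j + 1 := by omega
      have hon := orthonormal_iff_ite.mp (chainAux Q z step (j+1)).2.1
      have := hon ⟨i, hi⟩ ⟨j, hj⟩
      rw [hcompat _ _ hi, hcompat _ _ hj] at this
      rw [this]
      by_cases h : i = j
      · simp [h]
      · rw [if_neg (by simpa [Fin.ext_iff] using h), if_neg h]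
    · have hi : i < i + 1 := by omega
      have hj : j < i + 1 := by omega
      have hon := orthonormal_iff_ite.mp (chainAux Q z step (i+1)).2.1
      have := hon ⟨i, hi⟩ ⟨j, hj⟩
      rw [hcompat _ _ hi, hcompat _ _ hj] at this
      rw [this]
      by_cases h : i = j
      · simp [h]
      · rw [if_neg (by simpa [Fin.ext_iff] using h), if_neg h]
  · intro n
    have := (chainAux Q z step (n+1)).2.2 (Fin.last n)
    simpa [hcompat] using this

theorem exists_orthonormal_seq_of_rho_eq_zero
    {H : Type*} [NormedAddCommGroup H] [InnerProductSpace ℝ H] [CompleteSpace H]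
    (hinf : ¬ FiniteDimensional ℝ H)
    (D : Set H) (hD : ∀ g ∈ D, ‖g‖ = 1)
    (hspan : (Submodule.span ℝ D).topologicalClosure = ⊤)
    (hρ : (⨅ x : {x : H // ‖x‖ = 1}, ⨆ g : D, |(inner ℝ (x : H) (g : H) : ℝ)|) = 0) :
    ∃ w : ℕ → H, Orthonormal ℝ w ∧
      Filter.Tendsto (fun n => ⨆ g : D, |(inner ℝ (w n) (g : H) : ℝ)|)
        Filter.atTop (nhds 0) := by
  classical
  have hnt : Nontrivial H := by
    by_contra h
    rw [not_nontrivial_iff_subsingleton] at h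
    exact hinf inferInstance
  set S : H → ℝ := fun x => ⨆ g : D, |(inner ℝ x (g : H) : ℝ)| with hSdef
  -- D is nonempty
  have hDne : D.Nonempty := by
    by_contra h
    rw [Set.not_nonempty_iff_eq_empty] at h
    rw [h, Submodule.span_empty] at hspan
    have hcl : (⊥ : Submodule ℝ H).topologicalClosure = ⊥ :=
      SetLike.ext' (by
        rw [Submodule.topologicalClosure_coe, Submodule.bot_coe,
          isClosed_singleton.closure_eq])
    rw [hcl] at hspan
    exact bot_ne_top hspan
  haveI : Nonempty D := hDne.to_subtype
  -- basic facts about S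
  have bddS : ∀ x : H, BddAbove (Set.range fun g : D => |(inner ℝ x (g : H) : ℝ)|) := by
    intro x
    refine ⟨‖x‖, ?_⟩
    rintro r ⟨g, rfl⟩
    calc |(inner ℝ x (g : H) : ℝ)| ≤ ‖x‖ * ‖(g : H)‖ := abs_real_inner_le_norm x g
    _ = ‖x‖ := by rw [hD g g.2, mul_one]
  have inner_le_S : ∀ (x : H) (g : D), |(inner ℝ x (g : H) : ℝ)| ≤ S x :=
    fun x g => le_ciSup (bddS x) g
  have S_nonneg : ∀ x : H, 0 ≤ S x :=
    fun x => le_trans (abs_nonneg _) (inner_le_S x (Classical.arbitrary D))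
  have S_le_norm : ∀ x : H, S x ≤ ‖x‖ := by
    intro x
    refine ciSup_le fun g => ?_
    calc |(inner ℝ x (g : H) : ℝ)| ≤ ‖x‖ * ‖(g : H)‖ := abs_real_inner_le_norm x g
    _ = ‖x‖ := by rw [hD g g.2, mul_one]
  -- there exist unit vectors with arbitrarily small S
  have hA : ∀ δ : ℝ, 0 < δ → ∃ x : H, ‖x‖ = 1 ∧ S x < δ := by
    intro δ hδ
    obtain ⟨x0, hx0⟩ := (exists_norm_eq H zero_le_one : ∃ x : H, ‖x‖ = 1)
    haveI : Nonempty {x : H // ‖x‖ = 1} := ⟨⟨x0, hx0⟩⟩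
    have : (⨅ x : {x : H // ‖x‖ = 1}, S x) < δ := by
      rw [hSdef]; rw [hρ]; exact hδ
    obtain ⟨⟨x, hx⟩, hlt⟩ := exists_lt_of_ciInf_lt this
    exact ⟨x, hx, hlt⟩
  -- weak smallness against any fixed vector
  have hB : ∀ (v : H) (η : ℝ), 0 < η → ∃ C : ℝ, 0 ≤ C ∧
      ∀ x : H, ‖x‖ = 1 → |(inner ℝ x v : ℝ)| ≤ η + C * S x := by
    intro v η hη
    have hv : v ∈ closure ((Submodule.span ℝ D : Submodule ℝ H) : Set H) := by
      have : v ∈ (Submodule.span ℝ D).topologicalClosure := by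
        rw [hspan]; exact Submodule.mem_top
      rwa [← SetLike.mem_coe, Submodule.topologicalClosure_coe] at this
    obtain ⟨u, hu, hdist⟩ := Metric.mem_closure_iff.mp hv η hη
    obtain ⟨c, hcsupp, hcsum⟩ := Submodule.mem_span_set.mp hu
    refine ⟨∑ g ∈ c.support, |c g|, Finset.sum_nonneg fun g _ => abs_nonneg _, ?_⟩
    intro x hx
    have h1 : |(inner ℝ x (v - u) : ℝ)| ≤ η := by
      calc |(inner ℝ x (v - u) : ℝ)| ≤ ‖x‖ * ‖v - u‖ := abs_real_inner_le_norm _ _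
      _ = ‖v - u‖ := by rw [hx, one_mul]
      _ ≤ η := by rw [← dist_eq_norm]; exact hdist.le
    have h2 : |(inner ℝ x u : ℝ)| ≤ (∑ g ∈ c.support, |c g|) * S x := by
      have hu' : u = ∑ g ∈ c.support, c g • g := by
        rw [← hcsum]; rfl
      rw [hu', inner_sum]
      calc |∑ g ∈ c.support, (inner ℝ x (c g • g) : ℝ)|
          ≤ ∑ g ∈ c.support, |(inner ℝ x (c g • g) : ℝ)| := Finset.abs_sum_le_sum_abs _ _
        _ ≤ ∑ g ∈ c.support, |c g| * S x := by
            refine Finset.sum_le_sum fun g hg => ?_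
            rw [real_inner_smul_right, abs_mul]
            exact mul_le_mul_of_nonneg_left
              (inner_le_S x ⟨g, hcsupp hg⟩) (abs_nonneg _)
        _ = (∑ g ∈ c.support, |c g|) * S x := by rw [Finset.sum_mul]
    calc |(inner ℝ x v : ℝ)| = |(inner ℝ x (v - u) : ℝ) + (inner ℝ x u : ℝ)| := by
          rw [← inner_add_right]; norm_num
      _ ≤ |(inner ℝ x (v - u) : ℝ)| + |(inner ℝ x u : ℝ)| := abs_add_le _ _
      _ ≤ η + (∑ g ∈ c.support, |c g|) * S x := add_le_add h1 h2
  -- smallness against finitely many fixed vectors simultaneously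
  have hC : ∀ (n : ℕ) (f : Fin n → H) (ε : ℝ), 0 < ε →
      ∃ x : H, ‖x‖ = 1 ∧ S x < ε ∧ ∀ i, |(inner ℝ x (f i) : ℝ)| < ε := by
    intro n f ε hε
    choose C hC0 hCb using fun i => hB (f i) (ε/2) (half_pos hε)
    set Ct : ℝ := ∑ i, C i + 1 with hCt
    have hCtpos : 0 < Ct := by
      have : (0:ℝ) ≤ ∑ i, C i := Finset.sum_nonneg fun i _ => hC0 i
      linarith
    obtain ⟨x, hx1, hx2⟩ := hA (min ε ((ε/2) / Ct)) (lt_min hε (by positivity))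
    refine ⟨x, hx1, lt_of_lt_of_le hx2 (min_le_left _ _), ?_⟩
    intro i
    have hCi : C i ≤ Ct := by
      have : C i ≤ ∑ j, C j :=
        Finset.single_le_sum (fun j _ => hC0 j) (Finset.mem_univ i)
      linarith
    have h1 : C i * S x ≤ Ct * S x := mul_le_mul_of_nonneg_right hCi (S_nonneg x)
    have h2 : Ct * S x < Ct * ((ε/2) / Ct) :=
      mul_lt_mul_of_pos_left (lt_of_lt_of_le hx2 (min_le_right _ _)) hCtpos
    have h3 : Ct * ((ε/2) / Ct) = ε/2 := mul_div_cancel₀ _ (ne_of_gt hCtpos)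
    calc |(inner ℝ x (f i) : ℝ)| ≤ ε/2 + C i * S x := hCb i x hx1
      _ < ε/2 + ε/2 := by nlinarith
      _ = ε := by ring
  -- geometric sum bound
  have hgeo : ∀ n : ℕ, (∑ i : Fin n, ((1:ℝ)/2) ^ (i : ℕ)) ≤ 2 := by
    intro n
    rw [Fin.sum_univ_eq_sum_range]
    rw [geom_sum_eq (by norm_num : ((1:ℝ)/2) ≠ 1) n]
    have h1 : (0:ℝ) ≤ (1/2:ℝ)^n := by positivity
    have heq : (((1:ℝ)/2)^n - 1)/((1/2:ℝ) - 1) = 2 - 2*((1:ℝ)/2)^n := by ring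
    rw [heq]
    linarith
  -- the recursive step
  have hstep : ∀ (n : ℕ) (f : Fin n → H), Orthonormal ℝ f →
      (∀ i : Fin n, S (f i) ≤ ((1:ℝ)/2) ^ (i : ℕ)) →
      ∃ x : H, ‖x‖ = 1 ∧ (∀ i, (inner ℝ x (f i) : ℝ) = 0) ∧ S x ≤ ((1:ℝ)/2) ^ n := by
    intro n f honf hSf
    set ε : ℝ := min (((1:ℝ)/2)^n / 6) (1 / (2 * (n+1))) with hεdef
    have hεpos : 0 < ε := lt_min (by positivity) (by positivity)
    obtain ⟨x, hx1, hxS, hxf⟩ := hC n f ε hεpos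
    set y : H := x - ∑ i, (inner ℝ x (f i) : ℝ) • f i with hydef
    have hff := orthonormal_iff_ite.mp honf
    have hsum_inner : ∀ j, (inner ℝ (∑ i, (inner ℝ x (f i) : ℝ) • f i) (f j) : ℝ)
        = (inner ℝ x (f j) : ℝ) := by
      intro j
      rw [sum_inner]
      have : ∀ i, (inner ℝ ((inner ℝ x (f i) : ℝ) • f i) (f j) : ℝ)
          = (inner ℝ x (f i) : ℝ) * (if i = j then (1:ℝ) else 0) := by
        intro i; rw [real_inner_smul_left, hff i j]
      simp only [this, mul_ite, mul_one, mul_zero]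
      rw [Finset.sum_ite_eq' Finset.univ j (fun i => (inner ℝ x (f i) : ℝ))]
      simp
    have hyf : ∀ j, (inner ℝ y (f j) : ℝ) = 0 := by
      intro j
      rw [hydef, inner_sub_left, hsum_inner j, sub_self]
    -- norm bound
    have hsumnorm : ‖∑ i, (inner ℝ x (f i) : ℝ) • f i‖ ≤ (n : ℝ) * ε := by
      calc ‖∑ i, (inner ℝ x (f i) : ℝ) • f i‖
          ≤ ∑ i, ‖(inner ℝ x (f i) : ℝ) • f i‖ := norm_sum_le _ _
        _ ≤ ∑ _i : Fin n, ε := by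
            refine Finset.sum_le_sum fun i _ => ?_
            rw [norm_smul, honf.1 i, mul_one]
            exact (hxf i).le
        _ = (n : ℝ) * ε := by simp [mul_comm]
    have hnε : (n : ℝ) * ε ≤ 1/2 := by
      have h1 : ε ≤ 1 / (2 * (n+1)) := min_le_right _ _
      have h2 : (0:ℝ) < 2 * ((n:ℝ)+1) := by positivity
      have h3 : (n:ℝ) * ε ≤ (n:ℝ) * (1 / (2 * ((n:ℝ)+1))) := by
        refine mul_le_mul_of_nonneg_left ?_ (Nat.cast_nonneg n)
        exact_mod_cast h1
      have h4 : (n:ℝ) * (1 / (2 * ((n:ℝ)+1))) ≤ 1/2 := by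
        rw [mul_one_div, div_le_div_iff₀ h2 (by norm_num : (0:ℝ) < 2)]
        nlinarith [Nat.cast_nonneg (α := ℝ) n]
      linarith
    have hynorm : 1/2 ≤ ‖y‖ := by
      have h5 : ‖x‖ - ‖∑ i, (inner ℝ x (f i) : ℝ) • f i‖ ≤ ‖y‖ := by
        rw [hydef]; exact norm_sub_norm_le _ _
      rw [hx1] at h5
      linarith
    have hy0 : y ≠ 0 := by
      intro h; rw [h, norm_zero] at hynorm; linarith
    have hyinv : ‖y‖⁻¹ ≤ 2 := by
      rw [inv_le_comm₀ (by linarith) (by norm_num)]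
      linarith
    refine ⟨‖y‖⁻¹ • y, ?_, ?_, ?_⟩
    · rw [norm_smul, norm_inv, norm_norm, inv_mul_cancel₀ (by linarith)]
    · intro i
      rw [real_inner_smul_left, hyf i, mul_zero]
    · -- S bound
      have hSy : S y ≤ 3 * ε := by
        have : S y ≤ ε + 2 * ε := by
          refine ciSup_le fun g => ?_
          have hg1 : |(inner ℝ y (g : H) : ℝ)|
              ≤ |(inner ℝ x (g : H) : ℝ)|
                + ∑ i, |(inner ℝ x (f i) : ℝ)| * |(inner ℝ (f i) (g : H) : ℝ)| := by
            rw [hydef, inner_sub_left]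
            calc |(inner ℝ x (g:H) : ℝ) - (inner ℝ (∑ i, (inner ℝ x (f i):ℝ) • f i) (g:H) : ℝ)|
                ≤ |(inner ℝ x (g:H) : ℝ)| + |(inner ℝ (∑ i, (inner ℝ x (f i):ℝ) • f i) (g:H) : ℝ)| :=
                  abs_sub _ _
              _ ≤ |(inner ℝ x (g:H) : ℝ)|
                  + ∑ i, |(inner ℝ x (f i) : ℝ)| * |(inner ℝ (f i) (g : H) : ℝ)| := by
                  refine add_le_add_right ?_ _
                  rw [sum_inner]
                  refine le_trans (Finset.abs_sum_le_sum_abs _ _) ?_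
                  refine Finset.sum_le_sum fun i _ => ?_
                  rw [real_inner_smul_left, abs_mul]
          have hg2 : ∑ i, |(inner ℝ x (f i) : ℝ)| * |(inner ℝ (f i) (g : H) : ℝ)| ≤ 2 * ε := by
            calc ∑ i, |(inner ℝ x (f i) : ℝ)| * |(inner ℝ (f i) (g : H) : ℝ)|
                ≤ ∑ i : Fin n, ε * ((1:ℝ)/2) ^ (i:ℕ) := by
                  refine Finset.sum_le_sum fun i _ => ?_
                  refine mul_le_mul (hxf i).le
                    (le_trans (inner_le_S (f i) g) (hSf i)) (abs_nonneg _) hεpos.le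
              _ = ε * ∑ i : Fin n, ((1:ℝ)/2) ^ (i:ℕ) := by rw [Finset.mul_sum]
              _ ≤ ε * 2 := mul_le_mul_of_nonneg_left (hgeo n) hεpos.le
              _ = 2 * ε := by ring
          calc |(inner ℝ y (g:H) : ℝ)|
              ≤ |(inner ℝ x (g:H) : ℝ)|
                + ∑ i, |(inner ℝ x (f i) : ℝ)| * |(inner ℝ (f i) (g : H) : ℝ)| := hg1
            _ ≤ S x + 2 * ε := add_le_add (inner_le_S x g) hg2
            _ ≤ ε + 2 * ε := add_le_add_left hxS.le _
        linarith
      have hSw : S (‖y‖⁻¹ • y) ≤ ‖y‖⁻¹ * S y := by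
        refine ciSup_le fun g => ?_
        rw [real_inner_smul_left, abs_mul, abs_inv, abs_norm]
        exact mul_le_mul_of_nonneg_left (inner_le_S y g) (by positivity)
      have hε6 : 6 * ε ≤ ((1:ℝ)/2) ^ n := by
        have := min_le_left (((1:ℝ)/2)^n / 6) (1 / (2 * ((n:ℝ)+1)))
        have h' : ε ≤ ((1:ℝ)/2)^n / 6 := min_le_left _ _
        linarith
      calc S (‖y‖⁻¹ • y) ≤ ‖y‖⁻¹ * S y := hSw
        _ ≤ 2 * (3 * ε) := by
            refine mul_le_mul hyinv hSy (S_nonneg y) (by norm_num)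
        _ = 6 * ε := by ring
        _ ≤ ((1:ℝ)/2) ^ n := hε6
  -- conclude via the chain construction
  obtain ⟨w, hwon, hwP⟩ := orthonormal_chain (fun n x => S x ≤ ((1:ℝ)/2) ^ n) hstep
  refine ⟨w, hwon, ?_⟩
  refine squeeze_zero (fun n => S_nonneg (w n)) (fun n => hwP n) ?_
  exact tendsto_pow_atTop_nhds_zero_of_lt_one (by norm_num) (by norm_num)
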